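/- Let k be a positive integer such that 8 divides k and p = k+1 is prime. Then there exists a special KM-logarithm of length k. -/

import Mathlib

/-- A logarithmic function of length `k`: `f (a*b) = f a + f b` whenever
`a, b ∈ {1, …, k}` and `a*b ≤ k`. -/
def IsLogFun (k : ℕ) (f : ℕ → ZMod k) : Prop :=
  ∀ a b : ℕ, 1 ≤ a → 1 ≤ b → a ≤ k → b ≤ k → a * b ≤ k → f (a * b) = f a + f b

/-- A logarithm of length `k` is a logarithmic function that is a bijection
from `{1, …, k}` to `ℤ/kℤ`. -/
def IsLogarithm (k : ℕ) (f : ℕ → ZMod k) : Prop :=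
  IsLogFun k f ∧ Set.BijOn f (Set.Icc 1 k) Set.univ

/-- A special KM-logarithm of length `k`: a logarithm such that either `k` is odd,
or `k` is even and `f m` is an even element of `ℤ/kℤ` for every divisor `m` of `k/2`. -/
def IsSpecialKM (k : ℕ) (f : ℕ → ZMod k) : Prop :=
  IsLogarithm k f ∧ (Even k → ∀ m : ℕ, m ∣ k / 2 → ∃ y : ZMod k, f m = y + y)

lemma sq_of_dvd (k : ℕ) (hk : 0 < k) (h8 : 8 ∣ k) (hp : Nat.Prime (k + 1)) :
    ∀ m : ℕ, m ∣ k → IsSquare ((m : ZMod (k + 1))) := by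
  haveI : Fact (Nat.Prime (k + 1)) := ⟨hp⟩
  intro m
  induction m using Nat.recOnMul with
  | zero => intro h0; exact absurd (Nat.eq_zero_of_zero_dvd h0) hk.ne'
  | one => intro _; exact IsSquare.one
  | prime q hq =>
    intro hqk
    have hpne2 : k + 1 ≠ 2 := by omega
    rcases eq_or_ne q 2 with rfl | hq2
    · rw [show ((2:ℕ) : ZMod (k+1)) = (2 : ZMod (k+1)) by push_cast; ring]
      refine (ZMod.exists_sq_eq_two_iff hpne2).mpr (Or.inl ?_)
      obtain ⟨c, rfl⟩ := h8
      omega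
    · haveI : Fact (Nat.Prime q) := ⟨hq⟩
      have h4 : (k + 1) % 4 = 1 := by
        obtain ⟨c, rfl⟩ := h8; omega
      rw [ZMod.exists_sq_eq_prime_iff_of_mod_four_eq_one h4 hq2]
      have : ((k + 1 : ℕ) : ZMod q) = 1 := by
        push_cast
        rw [(ZMod.natCast_eq_zero_iff k q).mpr hqk]
        ring
      rw [this]
      exact IsSquare.one
  | mul a b iha ihb =>
    intro hab
    obtain ⟨c, hc⟩ := iha (dvd_trans ⟨b, rfl⟩ hab)
    obtain ⟨d, hd⟩ := ihb (dvd_trans ⟨a, mul_comm a b⟩ hab)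
    exact ⟨c * d, by push_cast [hc, hd]; ring⟩

theorem stmt_8 (k : ℕ) (hk : 0 < k) (h8 : 8 ∣ k) (hp : Nat.Prime (k + 1)) :
    ∃ f : ℕ → ZMod k, IsSpecialKM k f := by
  haveI : Fact (Nat.Prime (k + 1)) := ⟨hp⟩
  haveI : NeZero k := ⟨hk.ne'⟩
  have hcard : Nat.card (Multiplicative (ZMod k)) = Nat.card ((ZMod (k+1))ˣ) := by
    rw [Nat.card_eq_fintype_card, Nat.card_eq_fintype_card]
    rw [ZMod.card_units_eq_totient, Nat.totient_prime hp]
    simp [ZMod.card]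
  let ψ : Multiplicative (ZMod k) ≃* (ZMod (k+1))ˣ := mulEquivOfCyclicCardEq hcard
  -- coprimality
  have hcop : ∀ n : ℕ, 1 ≤ n → n ≤ k → Nat.Coprime n (k + 1) := by
    intro n h1 h2
    refine Nat.coprime_comm.mp (hp.coprime_iff_not_dvd.mpr fun h => ?_)
    have := Nat.le_of_dvd h1 h
    omega
  classical
  set f : ℕ → ZMod k := fun n =>
    if h : Nat.Coprime n (k + 1) then (ψ.symm (ZMod.unitOfCoprime n h)).toAdd else 0 with hf
  have hfval : ∀ n (h : Nat.Coprime n (k+1)),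
      f n = (ψ.symm (ZMod.unitOfCoprime n h)).toAdd := by
    intro n h; exact dif_pos h
  -- multiplicativity
  have hmul : IsLogFun k f := by
    intro a b ha hb hak hbk habk
    have hca := hcop a ha hak
    have hcb := hcop b hb hbk
    have hcab := hcop (a*b) (Nat.mul_pos ha hb) habk
    rw [hfval a hca, hfval b hcb, hfval _ hcab]
    have : ZMod.unitOfCoprime (a*b) hcab = ZMod.unitOfCoprime a hca * ZMod.unitOfCoprime b hcb := by
      ext; push_cast [ZMod.coe_unitOfCoprime]; ring
    rw [this, map_mul]
    rfl
  -- injectivity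
  have hinj : Set.InjOn f (Set.Icc 1 k) := by
    rintro a ⟨ha1, hak⟩ b ⟨hb1, hbk⟩ hab
    have hca := hcop a ha1 hak
    have hcb := hcop b hb1 hbk
    rw [hfval a hca, hfval b hcb] at hab
    have h1 : ZMod.unitOfCoprime a hca = ZMod.unitOfCoprime b hcb := by
      have := congrArg (fun z => ψ (Multiplicative.ofAdd z)) hab
      simpa using this
    have h2 : ((a : ZMod (k+1))) = (b : ZMod (k+1)) := by
      have := congrArg (fun u : (ZMod (k+1))ˣ => (u : ZMod (k+1))) h1
      simpa [ZMod.coe_unitOfCoprime] using this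
    have := congrArg ZMod.val h2
    rwa [ZMod.val_cast_of_lt (by omega), ZMod.val_cast_of_lt (by omega)] at this
  -- surjectivity
  have hsurj : Set.SurjOn f (Set.Icc 1 k) Set.univ := by
    rintro y -
    set u := ψ (Multiplicative.ofAdd y) with hu
    set n := ((u : ZMod (k+1))).val with hn
    have hn0 : (u : ZMod (k+1)) ≠ 0 := Units.ne_zero u
    have hnlt : n < k + 1 := ZMod.val_lt _
    have hn1 : 1 ≤ n := by
      rcases Nat.eq_zero_or_pos n with h0 | h
      · exfalso; apply hn0
        have := ZMod.natCast_rightInverse (n := k+1) (u : ZMod (k+1))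
        rw [← hn] at this  -- this : (n : ZMod (k+1)) = u
        rw [← this, h0]; simp
      · exact h
    refine ⟨n, ⟨hn1, by omega⟩, ?_⟩
    have hcn := hcop n hn1 (by omega)
    have hcast : ((n : ℕ) : ZMod (k+1)) = (u : ZMod (k+1)) :=
      ZMod.natCast_rightInverse (u : ZMod (k+1))
    have : ZMod.unitOfCoprime n hcn = u := by
      ext; rw [ZMod.coe_unitOfCoprime]; exact hcast
    rw [hfval n hcn, this, hu]
    simp
  -- special condition
  have hspec : ∀ m : ℕ, m ∣ k / 2 → ∃ y : ZMod k, f m = y + y := by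
    intro m hm
    have h2k : 2 ∣ k := dvd_trans (by norm_num) h8
    have hmk : m ∣ k := hm.trans (Nat.div_dvd_of_dvd h2k)
    have hm0 : m ≠ 0 := by
      rintro rfl
      have := Nat.eq_zero_of_zero_dvd hm
      omega
    have hmle : m ≤ k := Nat.le_of_dvd hk hmk
    obtain ⟨c, hc⟩ := sq_of_dvd k hk h8 hp m hmk
    have hcm := hcop m (by omega) hmle
    have hmne : ((m : ℕ) : ZMod (k+1)) ≠ 0 := by
      intro h
      have := (ZMod.natCast_eq_zero_iff m (k+1)).mp h
      have := Nat.le_of_dvd (by omega) this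
      omega
    have hc0 : c ≠ 0 := by rintro rfl; simp at hc; exact hmne hc
    have hcu : IsUnit c := hc0.isUnit
    have huu : ZMod.unitOfCoprime m hcm = hcu.unit * hcu.unit := by
      ext; push_cast [ZMod.coe_unitOfCoprime, IsUnit.unit_spec]; exact hc
    refine ⟨(ψ.symm hcu.unit).toAdd, ?_⟩
    rw [hfval m hcm, huu, map_mul]
    rfl
  exact ⟨f, ⟨⟨hmul, fun _ _ => trivial, hinj, hsurj⟩, fun _ => hspec⟩⟩
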